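/- Let S = ⟨a,b⟩ be an orthodox semigroup generated by mutually inverse elements a, b with ab = a²b² and ba ≠ b²a². Then the maximum inverse semigroup homomorphic image S/𝒴 (where 𝒴 identifies elements with the same set of inverses) is isomorphic to the bicyclic semigroup, with the image of ab as its identity. -/

import Mathlib

namespace PaperStmt


/-- `S` is a regular semigroup. -/
def RegularSgp (S : Type*) [Semigroup S] : Prop := ∀ x : S, ∃ y, x * y * x = x

/-- The idempotents of `S` form a subsemigroup. -/
def IdemClosed (S : Type*) [Semigroup S] : Prop :=
  ∀ e f : S, e * e = e → f * f = f → (e * f) * (e * f) = e * f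

/-- An orthodox semigroup: regular with idempotents closed under multiplication. -/
def Orthodox (S : Type*) [Semigroup S] : Prop := RegularSgp S ∧ IdemClosed S

/-- Green's R-relation in a monoid. -/
def GreenRM {M : Type*} [Monoid M] (x y : M) : Prop :=
  (∃ s, x = y * s) ∧ (∃ s, y = x * s)

/-- Green's L-relation in a monoid. -/
def GreenLM {M : Type*} [Monoid M] (x y : M) : Prop :=
  (∃ s, x = s * y) ∧ (∃ s, y = s * x)

/-- Green's R-relation on a semigroup, computed in S¹ = WithOne S. -/
def GreenR {S : Type*} [Semigroup S] (x y : S) : Prop :=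
  GreenRM (x : WithOne S) (y : WithOne S)

/-- Green's L-relation on a semigroup. -/
def GreenL {S : Type*} [Semigroup S] (x y : S) : Prop :=
  GreenLM (x : WithOne S) (y : WithOne S)

/-- Green's H-relation. -/
def GreenH {S : Type*} [Semigroup S] (x y : S) : Prop := GreenR x y ∧ GreenL x y

/-- Green's D-relation, D = L ∘ R. -/
def GreenD {S : Type*} [Semigroup S] (x y : S) : Prop :=
  ∃ z : S, GreenL x z ∧ GreenR z y

/-- `a` belongs to some subgroup of `S`. -/
def InSubgroup {S : Type*} [Semigroup S] (a : S) : Prop :=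
  ∃ G : Set S, a ∈ G ∧ (∀ x ∈ G, ∀ y ∈ G, x * y ∈ G) ∧
    ∃ e ∈ G, (∀ x ∈ G, e * x = x ∧ x * e = x) ∧ ∀ x ∈ G, ∃ y ∈ G, x * y = e ∧ y * x = e

/-- The H-class of `a` is a group with identity element `e`. -/
def HClassGroupWithId {S : Type*} [Semigroup S] (a e : S) : Prop :=
  GreenH e a ∧ e * e = e ∧ (∀ x, GreenH x a → e * x = x ∧ x * e = x) ∧
    ∀ x, GreenH x a → ∃ y, GreenH y a ∧ x * y = e ∧ y * x = e

/-- The set of inverses of an element. -/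
def VSet {S : Type*} [Semigroup S] (x : S) : Set S := {y | x * y * x = x ∧ y * x * y = y}

/-- A concrete model of the bicyclic monoid ⟨p,q | pq = 1⟩: pairs (m,n) stand for qᵐpⁿ. -/
@[ext] structure Bicyclic where
  m : ℕ
  n : ℕ

instance : Mul Bicyclic := ⟨fun x y => ⟨x.m + (y.m - x.n), y.n + (x.n - y.m)⟩⟩
instance : One Bicyclic := ⟨⟨0, 0⟩⟩

theorem Bicyclic.one_def : (1 : Bicyclic) = ⟨0, 0⟩ := rfl

theorem Bicyclic.mul_def (x y : Bicyclic) :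
    x * y = ⟨x.m + (y.m - x.n), y.n + (x.n - y.m)⟩ := rfl

instance : Monoid Bicyclic where
  mul_assoc := by
    rintro ⟨a, b⟩ ⟨c, d⟩ ⟨e, f⟩
    simp only [Bicyclic.mul_def, Bicyclic.mk.injEq]
    omega
  one_mul := by
    rintro ⟨a, b⟩
    simp only [Bicyclic.one_def, Bicyclic.mul_def, Bicyclic.mk.injEq]
    omega
  mul_one := by
    rintro ⟨a, b⟩
    simp only [Bicyclic.one_def, Bicyclic.mul_def, Bicyclic.mk.injEq]
    omega


section AuxOrthodox

variable {S : Type*} [Semigroup S]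

theorem prodV (hE : IdemClosed S) {x y x' y' : S}
    (hx : x' ∈ VSet x) (hy : y' ∈ VSet y) : y' * x' ∈ VSet (x * y) := by
  obtain ⟨hx1, hx2⟩ := hx
  obtain ⟨hy1, hy2⟩ := hy
  have hxf : x * (x' * x) = x := by rw [← mul_assoc]; exact hx1
  have hey : (y * y') * y = y := hy1
  have hy' : y' * (y * y') = y' := by rw [← mul_assoc]; exact hy2
  have hf : (x' * x) * (x' * x) = x' * x := by
    calc (x' * x) * (x' * x) = x' * (x * (x' * x)) := by simp only [mul_assoc]
      _ = x' * x := by rw [hxf]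
  have he : (y * y') * (y * y') = y * y' := by
    calc (y * y') * (y * y') = y * (y' * (y * y')) := by simp only [mul_assoc]
      _ = y * y' := by rw [hy']
  have hband1 := hE _ _ hf he
  have hband2 := hE _ _ he hf
  constructor
  · calc (x * y) * (y' * x') * (x * y)
        = x * ((y * y') * ((x' * x) * y)) := by simp only [mul_assoc]
      _ = (x * (x' * x)) * ((y * y') * ((x' * x) * ((y * y') * y))) := by rw [hxf, hey]
      _ = x * ((((x' * x) * (y * y')) * ((x' * x) * (y * y'))) * y) := by
          simp only [mul_assoc]
      _ = x * (((x' * x) * (y * y')) * y) := by rw [hband1]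
      _ = (x * (x' * x)) * ((y * y') * y) := by simp only [mul_assoc]
      _ = x * y := by rw [hxf, hey]
  · calc (y' * x') * (x * y) * (y' * x')
        = y' * ((x' * x) * ((y * y') * x')) := by simp only [mul_assoc]
      _ = (y' * (y * y')) * ((x' * x) * ((y * y') * ((x' * x) * x'))) := by rw [hy', hx2]
      _ = y' * ((((y * y') * (x' * x)) * ((y * y') * (x' * x))) * x') := by
          simp only [mul_assoc]
      _ = y' * (((y * y') * (x' * x)) * x') := by rw [hband2]
      _ = (y' * (y * y')) * ((x' * x) * x') := by simp only [mul_assoc]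
      _ = y' * x' := by rw [hy', hx2]

theorem vIdem (hE : IdemClosed S) {e x : S} (he : e * e = e) (hx : x ∈ VSet e) :
    x * x = x := by
  obtain ⟨hh1, hh2⟩ := hx
  have hxe : (x * e) * (x * e) = x * e := by
    calc (x * e) * (x * e) = (x * e * x) * e := by simp only [mul_assoc]
      _ = x * e := by rw [hh2]
  have hex : (e * x) * (e * x) = e * x := by
    calc (e * x) * (e * x) = e * (x * e * x) := by simp only [mul_assoc]
      _ = e * x := by rw [hh2]
  have hb := hE _ _ hxe hex
  have hx' : (x * e) * (e * x) = x := by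
    calc (x * e) * (e * x) = x * ((e * e) * x) := by simp only [mul_assoc]
      _ = x * (e * x) := by rw [he]
      _ = x * e * x := by rw [← mul_assoc]
      _ = x := hh2
  calc x * x = ((x * e) * (e * x)) * ((x * e) * (e * x)) := by rw [hx']
    _ = (x * e) * (e * x) := hb
    _ = x := hx'

theorem exV (hR : RegularSgp S) (x : S) : ∃ y, y ∈ VSet x := by
  obtain ⟨y, hy⟩ := hR x
  refine ⟨y * x * y, ?_, ?_⟩
  · calc x * (y * x * y) * x = (x * y * x) * (y * x) := by simp only [mul_assoc]
      _ = x * (y * x) := by rw [hy]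
      _ = x * y * x := by rw [← mul_assoc]
      _ = x := hy
  · calc (y * x * y) * x * (y * x * y)
        = y * ((x * y * x) * (y * (x * y))) := by simp only [mul_assoc]
      _ = y * (x * (y * (x * y))) := by rw [hy]
      _ = y * ((x * y * x) * y) := by simp only [mul_assoc]
      _ = y * (x * y) := by rw [hy]
      _ = y * x * y := by rw [← mul_assoc]

theorem vCapAux (hE : IdemClosed S) {a b c d : S}
    (hca : c ∈ VSet a) (hcb : c ∈ VSet b) (hd : d ∈ VSet a) : d ∈ VSet b := by
  obtain ⟨haca, hcac⟩ := hca
  obtain ⟨hbcb, hcbc⟩ := hcb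
  obtain ⟨hada, hdad⟩ := hd
  have hb_c : b ∈ VSet c := ⟨hcbc, hbcb⟩
  have hdb : d * b ∈ VSet (c * a) := prodV hE hb_c ⟨hada, hdad⟩
  have hcbV : c * b ∈ VSet (c * a) := prodV hE hb_c ⟨haca, hcac⟩
  have hbd : b * d ∈ VSet (a * c) := prodV hE ⟨hada, hdad⟩ hb_c
  have hca_i : (c * a) * (c * a) = c * a := by
    calc (c * a) * (c * a) = c * (a * c * a) := by simp only [mul_assoc]
      _ = c * a := by rw [haca]
  have hac_i : (a * c) * (a * c) = a * c := by
    calc (a * c) * (a * c) = a * (c * a * c) := by simp only [mul_assoc]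
      _ = a * c := by rw [hcac]
  have hdb_i : (d * b) * (d * b) = d * b := vIdem hE hca_i hdb
  have hbd_i : (b * d) * (b * d) = b * d := vIdem hE hac_i hbd
  have hcb_i : (c * b) * (c * b) = c * b := by
    calc (c * b) * (c * b) = c * (b * c * b) := by simp only [mul_assoc]
      _ = c * b := by rw [hbcb]
  have had_i : (a * d) * (a * d) = a * d := by
    calc (a * d) * (a * d) = a * (d * a * d) := by simp only [mul_assoc]
      _ = a * d := by rw [hdad]
  have hB1 := hE _ _ hdb_i hcb_i
  have hB2 := hE _ _ hbd_i had_i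
  have hB1' : d * (b * (c * (b * (d * (b * (c * b)))))) = d * (b * (c * b)) := by
    have := hB1; simp only [mul_assoc] at this; exact this
  have hB2' : b * (d * (a * (d * (b * (d * (a * d)))))) = b * (d * (a * d)) := by
    have := hB2; simp only [mul_assoc] at this; exact this
  have r1' : c * (a * (d * (b * (c * a)))) = c * a := by
    have := hdb.1; simp only [mul_assoc] at this; exact this
  have r4' : c * (b * (c * (a * (c * b)))) = c * b := by
    have := hcbV.2; simp only [mul_assoc] at this; exact this
  have r5' : a * (c * (b * (d * (a * c)))) = a * c := by
    have := hbd.1; simp only [mul_assoc] at this; exact this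
  have hbcb' : b * (c * b) = b := by rw [← mul_assoc]; exact hbcb
  have hcac' : c * (a * c) = c := by rw [← mul_assoc]; exact hcac
  have haca' : a * (c * a) = a := by rw [← mul_assoc]; exact haca
  have hdad' : d * (a * d) = d := by rw [← mul_assoc]; exact hdad
  have Pbdb : b * d * b = b := by
    calc b * d * b
      _ = b * (d * b) := by simp only [mul_assoc]
      _ = (b * (c * b)) * (d * b) := congrArg (fun z => z * (d * b)) (hbcb'.symm)
      _ = b * ((c * b) * (d * b)) := by simp only [mul_assoc]
      _ = b * ((c * (b * (c * (a * (c * b))))) * (d * b)) := congrArg (fun z => b * (z * (d * b))) (r4'.symm)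
      _ = b * (c * (b * ((c * a) * (c * (b * (d * b)))))) := by simp only [mul_assoc]
      _ = b * (c * (b * ((c * (a * (d * (b * (c * a))))) * (c * (b * (d * b)))))) := congrArg (fun z => b * (c * (b * (z * (c * (b * (d * b))))))) (r1'.symm)
      _ = b * (c * (b * (c * (a * (d * (b * ((c * (a * c)) * (b * (d * b))))))))) := by simp only [mul_assoc]
      _ = b * (c * (b * (c * (a * (d * (b * (c * (b * (d * b))))))))) := congrArg (fun z => b * (c * (b * (c * (a * (d * (b * (z * (b * (d * b)))))))))) (hcac')
      _ = b * (c * (b * (c * (a * (d * (b * (c * (b * (d * (b)))))))))) := by simp only [mul_assoc]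
      _ = b * (c * (b * (c * (a * (d * (b * (c * (b * (d * ((b * (c * b)))))))))))) := congrArg (fun z => b * (c * (b * (c * (a * (d * (b * (c * (b * (d * (z))))))))))) (hbcb'.symm)
      _ = b * (c * (b * (c * (a * ((d * (b * (c * (b * (d * (b * (c * b)))))))))))) := by simp only [mul_assoc]
      _ = b * (c * (b * (c * (a * ((d * (b * (c * b)))))))) := congrArg (fun z => b * (c * (b * (c * (a * (z)))))) (hB1')
      _ = b * (c * (b * (c * (a * (d * (b * (c * b))))))) := by simp only [mul_assoc]
      _ = b * (c * (b * (c * (a * (d * (b * ((c * (a * c)) * b))))))) := congrArg (fun z => b * (c * (b * (c * (a * (d * (b * (z * b)))))))) (hcac'.symm)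
      _ = b * (c * (b * ((c * (a * (d * (b * (c * a))))) * (c * b)))) := by simp only [mul_assoc]
      _ = b * (c * (b * ((c * a) * (c * b)))) := congrArg (fun z => b * (c * (b * (z * (c * b))))) (r1')
      _ = b * ((c * (b * (c * (a * (c * b)))))) := by simp only [mul_assoc]
      _ = b * ((c * b)) := congrArg (fun z => b * (z)) (r4')
      _ = (b * (c * b)) := by simp only [mul_assoc]
      _ = b := congrArg (fun z => z) (hbcb')
      _ = b := by simp only [mul_assoc]

  have Pdbd : d * b * d = d := by
    calc d * b * d
      _ = d * (b * d) := by simp only [mul_assoc]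
      _ = (d * (a * d)) * (b * d) := congrArg (fun z => z * (b * d)) (hdad'.symm)
      _ = d * (a * (d * (b * d))) := by simp only [mul_assoc]
      _ = d * ((a * (c * a)) * (d * (b * d))) := congrArg (fun z => d * (z * (d * (b * d)))) (haca'.symm)
      _ = d * ((a * c) * (a * (d * (b * d)))) := by simp only [mul_assoc]
      _ = d * ((a * (c * (b * (d * (a * c))))) * (a * (d * (b * d)))) := congrArg (fun z => d * (z * (a * (d * (b * d))))) (r5'.symm)
      _ = d * (a * (c * (b * (d * ((a * (c * a)) * (d * (b * d))))))) := by simp only [mul_assoc]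
      _ = d * (a * (c * (b * (d * (a * (d * (b * d))))))) := congrArg (fun z => d * (a * (c * (b * (d * (z * (d * (b * d)))))))) (haca')
      _ = d * (a * (c * (b * (d * (a * (d * (b * (d)))))))) := by simp only [mul_assoc]
      _ = d * (a * (c * (b * (d * (a * (d * (b * ((d * (a * d)))))))))) := congrArg (fun z => d * (a * (c * (b * (d * (a * (d * (b * (z))))))))) (hdad'.symm)
      _ = d * (a * (c * ((b * (d * (a * (d * (b * (d * (a * d)))))))))) := by simp only [mul_assoc]
      _ = d * (a * (c * ((b * (d * (a * d)))))) := congrArg (fun z => d * (a * (c * (z)))) (hB2')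
      _ = d * (a * (c * (b * (d * (a * d))))) := by simp only [mul_assoc]
      _ = d * (a * (c * (b * (d * ((a * (c * a)) * d))))) := congrArg (fun z => d * (a * (c * (b * (d * (z * d)))))) (haca'.symm)
      _ = d * ((a * (c * (b * (d * (a * c))))) * (a * d)) := by simp only [mul_assoc]
      _ = d * ((a * c) * (a * d)) := congrArg (fun z => d * (z * (a * d))) (r5')
      _ = d * ((a * (c * a)) * d) := by simp only [mul_assoc]
      _ = d * (a * d) := congrArg (fun z => d * (z * d)) (haca')
      _ = (d * (a * d)) := by simp only [mul_assoc]
      _ = d := congrArg (fun z => z) (hdad')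
      _ = d := by simp only [mul_assoc]

  exact ⟨Pbdb, Pdbd⟩

theorem vCap (hE : IdemClosed S) {s t c : S} (hcs : c ∈ VSet s) (hct : c ∈ VSet t) :
    VSet s = VSet t := by
  ext d
  exact ⟨fun hd => vCapAux hE hcs hct hd, fun hd => vCapAux hE hct hcs hd⟩

theorem vcongR (hO : Orthodox S) {x y : S} (h : VSet x = VSet y) (z : S) :
    VSet (x * z) = VSet (y * z) := by
  obtain ⟨hR, hE⟩ := hO
  obtain ⟨z', hz⟩ := exV hR z
  obtain ⟨x', hx⟩ := exV hR x
  have hx'y : x' ∈ VSet y := h ▸ hx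
  exact vCap hE (prodV hE hx hz) (prodV hE hx'y hz)

theorem vcongL (hO : Orthodox S) {x y : S} (h : VSet x = VSet y) (z : S) :
    VSet (z * x) = VSet (z * y) := by
  obtain ⟨hR, hE⟩ := hO
  obtain ⟨z', hz⟩ := exV hR z
  obtain ⟨x', hx⟩ := exV hR x
  have hx'y : x' ∈ VSet y := h ▸ hx
  exact vCap hE (prodV hE hz hx) (prodV hE hz hx'y)

end AuxOrthodox

def paF {S : Type*} [Semigroup S] (a b : S) : ℕ → S
  | 0 => a * b
  | n + 1 => paF a b n * a

def qbF {S : Type*} [Semigroup S] (a b : S) : ℕ → S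
  | 0 => a * b
  | m + 1 => b * qbF a b m

def NF {S : Type*} [Semigroup S] (a b : S) (z : Bicyclic) : S :=
  qbF a b z.m * paF a b z.n

theorem bmul (m n k l : ℕ) :
    (⟨m, n⟩ : Bicyclic) * ⟨k, l⟩ = ⟨m + (k - n), l + (n - k)⟩ := rfl

section Core

variable {S : Type*} [Semigroup S] {a b : S}

theorem hee (h1 : a * b * a = a) : (a * b) * (a * b) = a * b := by
  calc (a * b) * (a * b) = (a * b * a) * b := by simp only [mul_assoc]
    _ = a * b := by rw [h1]

theorem hbab (h2 : b * a * b = b) : b * (a * b) = b := by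
  rw [← mul_assoc]; exact h2

theorem epa (h1 : a * b * a = a) (n : ℕ) : (a * b) * paF a b n = paF a b n := by
  induction n with
  | zero => exact hee h1
  | succ n ih =>
      show (a * b) * (paF a b n * a) = paF a b n * a
      rw [← mul_assoc, ih]

theorem qbe (h1 : a * b * a = a) (h2 : b * a * b = b) (m : ℕ) :
    qbF a b m * (a * b) = qbF a b m := by
  induction m with
  | zero => exact hee h1
  | succ m ih =>
      show (b * qbF a b m) * (a * b) = b * qbF a b m
      rw [mul_assoc, ih]

theorem gae (hO : Orthodox S) (h1 : a * b * a = a) (h2 : b * a * b = b)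
    (h3 : a * b = a * a * (b * b)) : VSet (a * (a * b)) = VSet a := by
  have c1 : (a * (a * b)) * b * (a * (a * b)) = a * (a * b) := by
    calc (a * (a * b)) * b * (a * (a * b))
        = (a * a * (b * b)) * (a * (a * b)) := by simp only [mul_assoc]
      _ = (a * b) * (a * (a * b)) := by rw [← h3]
      _ = (a * b * a) * (a * b) := by simp only [mul_assoc]
      _ = a * (a * b) := by rw [h1]
  have c2 : b * (a * (a * b)) * b = b := by
    calc b * (a * (a * b)) * b = b * (a * a * (b * b)) := by simp only [mul_assoc]
      _ = b * (a * b) := by rw [← h3]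
      _ = b := hbab h2
  exact vCap hO.2 ⟨c1, c2⟩ ⟨h1, h2⟩

theorem geb (hO : Orthodox S) (h1 : a * b * a = a) (h2 : b * a * b = b)
    (h3 : a * b = a * a * (b * b)) : VSet ((a * b) * b) = VSet b := by
  have c1 : ((a * b) * b) * a * ((a * b) * b) = (a * b) * b := by
    calc ((a * b) * b) * a * ((a * b) * b)
        = ((a * b) * b) * (a * a * (b * b)) := by simp only [mul_assoc]
      _ = ((a * b) * b) * (a * b) := by rw [← h3]
      _ = (a * b) * (b * a * b) := by simp only [mul_assoc]
      _ = (a * b) * b := by rw [h2]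
  have c2 : a * ((a * b) * b) * a = a := by
    calc a * ((a * b) * b) * a = (a * a * (b * b)) * a := by simp only [mul_assoc]
      _ = (a * b) * a := by rw [← h3]
      _ = a := h1
  exact vCap hO.2 ⟨c1, c2⟩ ⟨h2, h1⟩

theorem gpae (hO : Orthodox S) (h1 : a * b * a = a) (h2 : b * a * b = b)
    (h3 : a * b = a * a * (b * b)) (n : ℕ) :
    VSet (paF a b n * (a * b)) = VSet (paF a b n) := by
  cases n with
  | zero => exact congrArg VSet (hee h1)
  | succ n =>
      have e1 : paF a b (n + 1) * (a * b) = paF a b n * (a * (a * b)) := by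
        show (paF a b n * a) * (a * b) = _
        simp only [mul_assoc]
      rw [e1]
      exact vcongL hO (gae hO h1 h2 h3) _

theorem geqb (hO : Orthodox S) (h1 : a * b * a = a) (h2 : b * a * b = b)
    (h3 : a * b = a * a * (b * b)) (k : ℕ) :
    VSet ((a * b) * qbF a b k) = VSet (qbF a b k) := by
  cases k with
  | zero => exact congrArg VSet (hee h1)
  | succ k =>
      have e1 : (a * b) * qbF a b (k + 1) = ((a * b) * b) * qbF a b k := by
        show (a * b) * (b * qbF a b k) = _
        simp only [mul_assoc]
      rw [e1]
      exact vcongR hO (geb hO h1 h2 h3) _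

theorem gpaadd (hO : Orthodox S) (h1 : a * b * a = a) (h2 : b * a * b = b)
    (h3 : a * b = a * a * (b * b)) (i l : ℕ) :
    VSet (paF a b i * paF a b l) = VSet (paF a b (i + l)) := by
  induction l with
  | zero => exact gpae hO h1 h2 h3 i
  | succ l ih =>
      have e1 : paF a b i * paF a b (l + 1) = (paF a b i * paF a b l) * a := by
        show paF a b i * (paF a b l * a) = _
        simp only [mul_assoc]
      rw [e1]
      have := vcongR hO ih a
      calc VSet ((paF a b i * paF a b l) * a) = VSet (paF a b (i + l) * a) := this
        _ = VSet (paF a b (i + l + 1)) := rfl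

theorem gqbadd (hO : Orthodox S) (h1 : a * b * a = a) (h2 : b * a * b = b)
    (h3 : a * b = a * a * (b * b)) (m j : ℕ) :
    VSet (qbF a b m * qbF a b j) = VSet (qbF a b (m + j)) := by
  induction m with
  | zero =>
      have := geqb hO h1 h2 h3 j
      simp only [Nat.zero_add]; exact this
  | succ m ih =>
      have e1 : qbF a b (m + 1) * qbF a b j = b * (qbF a b m * qbF a b j) := by
        show (b * qbF a b m) * qbF a b j = _
        simp only [mul_assoc]
      rw [e1]
      have e2 : (m + 1) + j = (m + j) + 1 := by omega
      rw [e2]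
      exact vcongL hO ih b

theorem gmid (hO : Orthodox S) (h1 : a * b * a = a) (h2 : b * a * b = b)
    (h3 : a * b = a * a * (b * b)) : ∀ n k : ℕ,
    VSet (paF a b n * qbF a b k) = VSet (NF a b ⟨k - n, n - k⟩) := by
  intro n
  induction n with
  | zero =>
      intro k
      have e1 : NF a b ⟨k - 0, 0 - k⟩ = qbF a b k := by
        rw [show (0 : ℕ) - k = 0 from by omega]
        exact qbe h1 h2 k
      rw [e1]
      exact geqb hO h1 h2 h3 k
  | succ n ih =>
      intro k
      cases k with
      | zero =>
          have e1 : NF a b ⟨0 - (n + 1), (n + 1) - 0⟩ = paF a b (n + 1) := by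
            have : (0 : ℕ) - (n + 1) = 0 := by omega
            rw [this]
            show qbF a b 0 * paF a b (n + 1) = paF a b (n + 1)
            exact epa h1 (n + 1)
          rw [e1]
          exact gpae hO h1 h2 h3 (n + 1)
      | succ k =>
          have e1 : paF a b (n + 1) * qbF a b (k + 1)
              = paF a b n * ((a * b) * qbF a b k) := by
            show (paF a b n * a) * (b * qbF a b k) = _
            simp only [mul_assoc]
          rw [e1, show (k + 1 : ℕ) - (n + 1) = k - n from by omega,
            show (n + 1 : ℕ) - (k + 1) = n - k from by omega]
          calc VSet (paF a b n * ((a * b) * qbF a b k))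
              = VSet (paF a b n * qbF a b k) :=
                vcongL hO (geqb hO h1 h2 h3 k) _
            _ = VSet (NF a b ⟨k - n, n - k⟩) := ih k

theorem gmulN (hO : Orthodox S) (h1 : a * b * a = a) (h2 : b * a * b = b)
    (h3 : a * b = a * a * (b * b)) (u v : Bicyclic) :
    VSet (NF a b u * NF a b v) = VSet (NF a b (u * v)) := by
  obtain ⟨m, n⟩ := u
  obtain ⟨k, l⟩ := v
  have e1 : NF a b ⟨m, n⟩ * NF a b ⟨k, l⟩
      = qbF a b m * ((paF a b n * qbF a b k) * paF a b l) := by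
    show (qbF a b m * paF a b n) * (qbF a b k * paF a b l) = _
    simp only [mul_assoc]
  have e2 : NF a b ⟨k - n, n - k⟩ * paF a b l
      = qbF a b (k - n) * (paF a b (n - k) * paF a b l) := by
    show (qbF a b (k - n) * paF a b (n - k)) * paF a b l = _
    simp only [mul_assoc]
  have e3 : qbF a b m * (qbF a b (k - n) * paF a b ((n - k) + l))
      = (qbF a b m * qbF a b (k - n)) * paF a b ((n - k) + l) := by
    simp only [mul_assoc]
  calc VSet (NF a b ⟨m, n⟩ * NF a b ⟨k, l⟩)
      = VSet (qbF a b m * ((paF a b n * qbF a b k) * paF a b l)) := congrArg VSet e1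
    _ = VSet (qbF a b m * (NF a b ⟨k - n, n - k⟩ * paF a b l)) :=
        vcongL hO (vcongR hO (gmid hO h1 h2 h3 n k) _) _
    _ = VSet (qbF a b m * (qbF a b (k - n) * (paF a b (n - k) * paF a b l))) :=
        congrArg VSet (by rw [e2])
    _ = VSet (qbF a b m * (qbF a b (k - n) * paF a b ((n - k) + l))) :=
        vcongL hO (vcongL hO (gpaadd hO h1 h2 h3 (n - k) l) _) _
    _ = VSet ((qbF a b m * qbF a b (k - n)) * paF a b ((n - k) + l)) := congrArg VSet e3
    _ = VSet (qbF a b (m + (k - n)) * paF a b ((n - k) + l)) :=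
        vcongR hO (gqbadd hO h1 h2 h3 m (k - n)) _
    _ = VSet (NF a b (⟨m, n⟩ * ⟨k, l⟩)) := by
        rw [bmul]
        show _ = VSet (qbF a b (m + (k - n)) * paF a b (l + (n - k)))
        rw [Nat.add_comm (n - k) l]

end Core

theorem bkey (R : Bicyclic → Bicyclic → Prop)
    (hsymm : ∀ {u v}, R u v → R v u)
    (htrans : ∀ {u v w}, R u v → R v w → R u w)
    (hcomp : ∀ (w z : Bicyclic) {u v}, R u v → R (w * u * z) (w * v * z))
    {u v : Bicyclic} (huv : R u v) (hne : u ≠ v) : R ⟨1, 1⟩ ⟨2, 2⟩ := by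
  -- step C helper
  have stepC : R 1 ⟨1, 1⟩ → R ⟨1, 1⟩ ⟨2, 2⟩ := by
    intro h11
    have := hcomp ⟨1, 0⟩ ⟨0, 1⟩ h11
    rwa [show (⟨1, 0⟩ : Bicyclic) * 1 * ⟨0, 1⟩ = ⟨1, 1⟩ from rfl,
      show (⟨1, 0⟩ : Bicyclic) * ⟨1, 1⟩ * ⟨0, 1⟩ = ⟨2, 2⟩ from rfl] at this
  -- from R 1 ⟨i,i⟩ with i ≥ 1, conclude
  have diag : ∀ i : ℕ, 1 ≤ i → R 1 ⟨i, i⟩ → R 1 ⟨1, 1⟩ := by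
    intro i hi h
    have := hcomp ⟨0, i - 1⟩ ⟨i - 1, 0⟩ h
    rwa [show (⟨0, i - 1⟩ : Bicyclic) * 1 * ⟨i - 1, 0⟩ = 1 from by
        apply Bicyclic.ext <;> simp only [bmul, Bicyclic.one_def] <;> omega,
      show (⟨0, i - 1⟩ : Bicyclic) * ⟨i, i⟩ * ⟨i - 1, 0⟩ = ⟨1, 1⟩ from by
        apply Bicyclic.ext <;> simp only [bmul, Bicyclic.one_def] <;> omega] at this
  -- from R 1 ⟨d,0⟩ with d ≥ 1, conclude
  have fromQ : ∀ d : ℕ, 1 ≤ d → R 1 ⟨d, 0⟩ → R 1 ⟨1, 1⟩ := by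
    intro d hd hqd
    have hpd : R 1 ⟨0, d⟩ := by
      have := hcomp ⟨0, d⟩ 1 hqd
      rw [show (⟨0, d⟩ : Bicyclic) * 1 * 1 = ⟨0, d⟩ from by
          apply Bicyclic.ext <;> simp only [bmul, Bicyclic.one_def] <;> omega,
        show (⟨0, d⟩ : Bicyclic) * ⟨d, 0⟩ * 1 = 1 from by
          apply Bicyclic.ext <;> simp only [bmul, Bicyclic.one_def] <;> omega] at this
      exact hsymm this
    have hdd : R 1 ⟨d, d⟩ := by
      have h2' := hcomp 1 ⟨0, d⟩ hqd
      rw [show (1 : Bicyclic) * 1 * ⟨0, d⟩ = ⟨0, d⟩ from by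
          apply Bicyclic.ext <;> simp only [bmul, Bicyclic.one_def] <;> omega,
        show (1 : Bicyclic) * ⟨d, 0⟩ * ⟨0, d⟩ = ⟨d, d⟩ from by
          apply Bicyclic.ext <;> simp only [bmul, Bicyclic.one_def] <;> omega] at h2'
      exact htrans hpd h2'
    exact diag d hd hdd
  -- main: any z ≠ 1 with R 1 z gives the conclusion
  have key' : ∀ z : Bicyclic, z ≠ 1 → R 1 z → R ⟨1, 1⟩ ⟨2, 2⟩ := by
    rintro ⟨i, j⟩ hz hRz
    have hij : ¬(i = 0 ∧ j = 0) := by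
      rintro ⟨rfl, rfl⟩; exact hz rfl
    apply stepC
    by_cases hd : i = j
    · subst hd
      exact diag i (by omega) hRz
    · -- strip min
      have hstrip : R 1 ⟨i - min i j, j - min i j⟩ := by
        have := hcomp ⟨0, min i j⟩ ⟨min i j, 0⟩ hRz
        rwa [show (⟨0, min i j⟩ : Bicyclic) * 1 * ⟨min i j, 0⟩ = 1 from by
            apply Bicyclic.ext <;> simp only [bmul, Bicyclic.one_def] <;> omega,
          show (⟨0, min i j⟩ : Bicyclic) * ⟨i, j⟩ * ⟨min i j, 0⟩
              = ⟨i - min i j, j - min i j⟩ from by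
            apply Bicyclic.ext <;> simp only [bmul, Bicyclic.one_def] <;> omega] at this
      rcases Nat.lt_or_ge i j with hlt | hge
      · -- i < j : ⟨0, j - i⟩
        rw [show i - min i j = 0 from by omega, show j - min i j = j - i from by omega]
          at hstrip
        have hqd : R 1 ⟨j - i, 0⟩ := by
          have := hcomp 1 ⟨j - i, 0⟩ hstrip
          rw [show (1 : Bicyclic) * 1 * ⟨j - i, 0⟩ = ⟨j - i, 0⟩ from by
              apply Bicyclic.ext <;> simp only [bmul, Bicyclic.one_def] <;> omega,
            show (1 : Bicyclic) * ⟨0, j - i⟩ * ⟨j - i, 0⟩ = 1 from by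
              apply Bicyclic.ext <;> simp only [bmul, Bicyclic.one_def] <;> omega] at this
          exact hsymm this
        exact fromQ (j - i) (by omega) hqd
      · rw [show i - min i j = i - j from by omega, show j - min i j = 0 from by omega]
          at hstrip
        exact fromQ (i - j) (by omega) hstrip
  -- step A: produce z ≠ 1 with R 1 z
  obtain ⟨m, n⟩ := u
  obtain ⟨k, l⟩ := v
  have hA : R 1 ((⟨0, m⟩ : Bicyclic) * ⟨k, l⟩ * ⟨n, 0⟩) := by
    have := hcomp ⟨0, m⟩ ⟨n, 0⟩ huv
    rwa [show (⟨0, m⟩ : Bicyclic) * ⟨m, n⟩ * ⟨n, 0⟩ = 1 from by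
        apply Bicyclic.ext <;> simp only [bmul, Bicyclic.one_def] <;> omega] at this
  have hB : R ((⟨0, k⟩ : Bicyclic) * ⟨m, n⟩ * ⟨l, 0⟩) 1 := by
    have := hcomp ⟨0, k⟩ ⟨l, 0⟩ huv
    rwa [show (⟨0, k⟩ : Bicyclic) * ⟨k, l⟩ * ⟨l, 0⟩ = 1 from by
        apply Bicyclic.ext <;> simp only [bmul, Bicyclic.one_def] <;> omega] at this
  by_cases hz1 : (⟨0, m⟩ : Bicyclic) * ⟨k, l⟩ * ⟨n, 0⟩ = 1
  · by_cases hz2 : (⟨0, k⟩ : Bicyclic) * ⟨m, n⟩ * ⟨l, 0⟩ = 1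
    · exfalso
      apply hne
      simp only [bmul, Bicyclic.one_def, Bicyclic.mk.injEq] at hz1 hz2
      have : m = k ∧ n = l := by omega
      exact Bicyclic.ext this.1 this.2
    · exact key' _ hz2 (hsymm hB)
  · exact key' _ hz1 hA

section Main

variable {S : Type*} [Semigroup S] {a b : S}

theorem genN (hO : Orthodox S)
    (hgen : Subsemigroup.closure ({a, b} : Set S) = ⊤)
    (h1 : a * b * a = a) (h2 : b * a * b = b) (h3 : a * b = a * a * (b * b)) :
    ∀ x : S, ∃ z : Bicyclic, VSet x = VSet (NF a b z) := by
  intro x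
  let T : Subsemigroup S :=
    { carrier := {x | ∃ z : Bicyclic, VSet x = VSet (NF a b z)}
      mul_mem' := by
        rintro x y ⟨u, hu⟩ ⟨v, hv⟩
        refine ⟨u * v, ?_⟩
        calc VSet (x * y) = VSet (NF a b u * y) := vcongR hO hu y
          _ = VSet (NF a b u * NF a b v) := vcongL hO hv _
          _ = VSet (NF a b (u * v)) := gmulN hO h1 h2 h3 u v }
  have ha' : NF a b ⟨0, 1⟩ = a := by
    show (a * b) * ((a * b) * a) = a
    rw [h1, h1]
  have hb' : NF a b ⟨1, 0⟩ = b := by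
    show (b * (a * b)) * (a * b) = b
    rw [hbab h2, hbab h2]
  have hT : Subsemigroup.closure ({a, b} : Set S) ≤ T := by
    apply Subsemigroup.closure_le.2
    rintro x hx
    simp only [Set.mem_insert_iff, Set.mem_singleton_iff] at hx
    rcases hx with h | h
    · exact ⟨⟨0, 1⟩, by rw [h]; exact (congrArg VSet ha').symm⟩
    · exact ⟨⟨1, 0⟩, by rw [h]; exact (congrArg VSet hb').symm⟩
  exact hT (by rw [hgen]; trivial)

theorem injN (hO : Orthodox S)
    (h1 : a * b * a = a) (h2 : b * a * b = b) (h3 : a * b = a * a * (b * b))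
    (h4 : b * a ≠ b * b * (a * a)) {u v : Bicyclic}
    (h : VSet (NF a b u) = VSet (NF a b v)) : u = v := by
  by_contra hne
  have hkey := bkey (fun u v => VSet (NF a b u) = VSet (NF a b v))
    (fun h => h.symm) (fun h h' => h.trans h')
    (fun w z u v huv => by
      calc VSet (NF a b (w * u * z))
          = VSet (NF a b (w * u) * NF a b z) := (gmulN hO h1 h2 h3 _ _).symm
        _ = VSet ((NF a b w * NF a b u) * NF a b z) :=
            vcongR hO (gmulN hO h1 h2 h3 w u).symm _
        _ = VSet ((NF a b w * NF a b v) * NF a b z) :=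
            vcongR hO (vcongL hO huv _) _
        _ = VSet (NF a b (w * v) * NF a b z) := vcongR hO (gmulN hO h1 h2 h3 w v) _
        _ = VSet (NF a b (w * v * z)) := gmulN hO h1 h2 h3 _ _)
    h hne
  have hkey' : VSet (NF a b ⟨1, 1⟩) = VSet (NF a b ⟨2, 2⟩) := hkey
  have e11 : NF a b ⟨1, 1⟩ = b * a := by
    show (b * (a * b)) * ((a * b) * a) = b * a
    rw [hbab h2, h1]
  have e22 : NF a b ⟨2, 2⟩ = b * b * (a * a) := by
    show (b * (b * (a * b))) * (((a * b) * a) * a) = b * b * (a * a)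
    rw [hbab h2, h1]
  rw [e11, e22] at hkey'
  have hff : (b * a) * (b * a) = b * a := by
    calc (b * a) * (b * a) = b * (a * b * a) := by simp only [mul_assoc]
      _ = b * a := by rw [h1]
  have hmem : b * a ∈ VSet (b * a) := ⟨by rw [hff, hff], by rw [hff, hff]⟩
  have hmem2 : b * a ∈ VSet (b * b * (a * a)) := hkey' ▸ hmem
  have hcomp3 : (b * a) * (b * b * (a * a)) * (b * a) = b * b * (a * a) := by
    calc (b * a) * (b * b * (a * a)) * (b * a)
        = (b * a * b) * (b * (a * ((a * b) * a))) := by simp only [mul_assoc]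
      _ = b * (b * (a * ((a * b) * a))) := by rw [h2]
      _ = b * (b * (a * a)) := by rw [h1]
      _ = b * b * (a * a) := by simp only [mul_assoc]
  exact h4 (hmem2.2.symm.trans hcomp3)

end Main

theorem stmt14 {S : Type*} [Semigroup S] (hO : Orthodox S) (a b : S)
    (hgen : Subsemigroup.closure ({a, b} : Set S) = ⊤)
    (h1 : a * b * a = a) (h2 : b * a * b = b)
    (h3 : a * b = a * a * (b * b)) (h4 : b * a ≠ b * b * (a * a)) :
    ∃ φ : S → Bicyclic, Function.Surjective φ ∧
      (∀ x y : S, φ (x * y) = φ x * φ y) ∧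
      (∀ x y : S, φ x = φ y ↔ VSet x = VSet y) ∧
      φ (a * b) = 1 := by
  classical
  have h1' : a * b * a = a := h1
  have exN : ∀ x : S, ∃ z : Bicyclic, VSet x = VSet (NF a b z) :=
    genN hO hgen h1 h2 h3
  have inj : ∀ {u v : Bicyclic}, VSet (NF a b u) = VSet (NF a b v) → u = v :=
    fun h => injN hO h1 h2 h3 h4 h
  set φ : S → Bicyclic := fun x => (exN x).choose with hφ
  have hspec : ∀ x : S, VSet x = VSet (NF a b (φ x)) := fun x => (exN x).choose_spec
  refine ⟨φ, ?_, ?_, ?_, ?_⟩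
  · intro z
    exact ⟨NF a b z, (inj (hspec (NF a b z))).symm⟩
  · intro x y
    apply inj
    calc VSet (NF a b (φ (x * y))) = VSet (x * y) := (hspec (x * y)).symm
      _ = VSet (NF a b (φ x) * y) := vcongR hO (hspec x) y
      _ = VSet (NF a b (φ x) * NF a b (φ y)) := vcongL hO (hspec y) _
      _ = VSet (NF a b (φ x * φ y)) := gmulN hO h1 h2 h3 _ _
  · intro x y
    constructor
    · intro h
      calc VSet x = VSet (NF a b (φ x)) := hspec x
        _ = VSet (NF a b (φ y)) := by rw [h]
        _ = VSet y := (hspec y).symm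
    · intro h
      exact inj ((hspec x).symm.trans (h.trans (hspec y)))
  · apply inj
    have hN1 : NF a b 1 = a * b := hee h1
    calc VSet (NF a b (φ (a * b))) = VSet (a * b) := (hspec (a * b)).symm
      _ = VSet (NF a b 1) := (congrArg VSet hN1).symm

end PaperStmt
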